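/- Let G be a connected finite simple graph with a split between A and B, and let ∼ be the equivalence relation on A ∪ B generated by conditions (C1) and (C2). Then every connected component of G − (A ∪ B) contains a vertex adjacent to a vertex of exactly one equivalence class of ∼; consequently, the sets 𝔰(Φ), taken over all equivalence classes Φ of ∼, form a partition of 𝔰(A) ∪ 𝔰(B). -/

import Mathlib

/-- The segment of the word `τ` strictly between the two occurrences of `u`. -/
def betweenOccs {V : Type*} [DecidableEq V] (τ : List V) (u : V) : List V :=
  ((τ.dropWhile (fun x => decide (x ≠ u))).drop 1).takeWhile (fun x => decide (x ≠ u))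

/-- Two symbols `u` and `v` alternate in the circular word `τ` (i.e. their four
occurrences appear in cyclic order `u, v, u, v`): exactly one of the two
occurrences of `v` lies strictly between the two occurrences of `u`. -/
def Alternates {V : Type*} [DecidableEq V] (τ : List V) (u v : V) : Prop :=
  (betweenOccs τ u).count v = 1

/-- `τ` is a circle representation of `G`: a circular word (modelled as a list read
cyclically) in which every vertex occurs exactly twice, and two distinct vertices are
adjacent iff their occurrences alternate. -/
def IsCircleRep {V : Type*} [DecidableEq V] (G : SimpleGraph V) (τ : List V) : Prop :=
  (∀ v : V, τ.count v = 2) ∧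
  ∀ u v : V, u ≠ v → (G.Adj u v ↔ Alternates τ u v)

/-- A split of `G` between `A` and `B`, with short sides `SA = 𝔰(A)` and `SB = 𝔰(B)`:
a partition of the vertices into four parts such that every vertex of `A` is adjacent
to every vertex of `B`, there are no edges between `SA` and `B ∪ SB` nor between
`SB` and `A ∪ SA`, and both sides have at least two vertices. -/
def IsSplit {V : Type*} [DecidableEq V] (G : SimpleGraph V) (A B SA SB : Finset V) : Prop :=
  (∀ v : V, v ∈ A ∪ B ∪ SA ∪ SB) ∧
  Disjoint A B ∧ Disjoint A SA ∧ Disjoint A SB ∧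
  Disjoint B SA ∧ Disjoint B SB ∧ Disjoint SA SB ∧
  (∀ a ∈ A, ∀ b ∈ B, G.Adj a b) ∧
  (∀ s ∈ SA, ∀ x ∈ B ∪ SB, ¬ G.Adj s x) ∧
  (∀ s ∈ SB, ∀ x ∈ A ∪ SA, ¬ G.Adj s x) ∧
  2 ≤ (A ∪ SA).card ∧ 2 ≤ (B ∪ SB).card

/-- `C` is the vertex set of a connected component of `G − (A ∪ B)`: it is a nonempty
set of vertices outside `A ∪ B`, any two of its vertices are joined by a walk staying
inside `C`, and it is closed under adjacency to vertices outside `A ∪ B`. -/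
def OutsideComp {V : Type*} [DecidableEq V] (G : SimpleGraph V) (A B : Finset V)
    (C : Finset V) : Prop :=
  C.Nonempty ∧ (∀ v ∈ C, v ∉ A ∧ v ∉ B) ∧
  (∀ u ∈ C, ∀ v ∈ C, ∃ p : G.Walk u v, ∀ w ∈ p.support, w ∈ C) ∧
  (∀ u ∈ C, ∀ v : V, G.Adj u v → v ∉ A → v ∉ B → v ∈ C)

/-- The base relation `∼` on `A ∪ B`: `x ∼ y` if `x` and `y` are distinct
non-adjacent vertices of `A ∪ B` (condition (C1)), or if `x` and `y` are connected
by a path with at least one internal vertex, all of whose internal vertices lie in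
`SA ∪ SB = 𝔰(A) ∪ 𝔰(B)` (condition (C2)). -/
def SplitRel {V : Type*} [DecidableEq V] (G : SimpleGraph V) (A B SA SB : Finset V)
    (x y : V) : Prop :=
  x ∈ A ∪ B ∧ y ∈ A ∪ B ∧
  ((x ≠ y ∧ ¬ G.Adj x y) ∨
    ∃ p : G.Walk x y, p.IsPath ∧ 2 ≤ p.length ∧
      ∀ w ∈ p.support, w ≠ x → w ≠ y → w ∈ SA ∪ SB)

/-- `Φ` is an equivalence class of the equivalence relation on `A ∪ B` generated by
the conditions (C1) and (C2). -/
def IsClass {V : Type*} [DecidableEq V] (G : SimpleGraph V) (A B SA SB : Finset V)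
    (Φ : Set V) : Prop :=
  ∃ x, x ∈ A ∪ B ∧
    Φ = {y | y ∈ A ∪ B ∧ Relation.EqvGen (SplitRel G A B SA SB) x y}

/-- `𝔰(Φ)`: the union of the vertex sets of the connected components of
`G − (A ∪ B)` containing a vertex adjacent to a vertex of `Φ`. -/
def sClass {V : Type*} [DecidableEq V] (G : SimpleGraph V) (A B : Finset V)
    (Φ : Set V) : Set V :=
  {v | ∃ C : Finset V, OutsideComp G A B C ∧ v ∈ C ∧ ∃ c ∈ C, ∃ u ∈ Φ, G.Adj c u}


section Aux

variable {V : Type*} [DecidableEq V] {G : SimpleGraph V} {A B SA SB : Finset V}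

private lemma walk_stays {C : Finset V} (hC : OutsideComp G A B C) :
    ∀ {x y : V} (w : G.Walk x y), x ∈ C → (∀ z ∈ w.support, z ∉ A ∧ z ∉ B) → y ∈ C := by
  intro x y w
  induction w with
  | nil => exact fun h _ => h
  | @cons a b c h q ih =>
    intro ha hsupp
    have hbs : b ∈ (SimpleGraph.Walk.cons h q).support := by
      rw [SimpleGraph.Walk.support_cons]
      exact List.mem_cons_of_mem _ q.start_mem_support
    have hb : b ∈ C := hC.2.2.2 a ha b h (hsupp b hbs).1 (hsupp b hbs).2
    exact ih hb fun z hz => hsupp z (by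
      rw [SimpleGraph.Walk.support_cons]; exact List.mem_cons_of_mem _ hz)

private lemma comp_eq {C C' : Finset V} (hC : OutsideComp G A B C) (hC' : OutsideComp G A B C')
    {v : V} (hv : v ∈ C) (hv' : v ∈ C') : C = C' := by
  have key : ∀ (D D' : Finset V), OutsideComp G A B D → OutsideComp G A B D' →
      v ∈ D → v ∈ D' → D ⊆ D' := by
    intro D D' hD hD' hvD hvD' u hu
    obtain ⟨p, hp⟩ := hD.2.2.1 v hvD u hu
    exact walk_stays hD' p hvD' fun z hz => hD.2.1 z (hp z hz)
  exact Finset.Subset.antisymm (key C C' hC hC' hv hv') (key C' C hC' hC hv' hv)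

private lemma AB_nonempty (hconn : G.Connected) (hsplit : IsSplit G A B SA SB) :
    (A ∪ B).Nonempty := by
  obtain ⟨hcover, hAB, hASA, hASB, hBSA, hBSB, hSASB, hadj, hSAr, hSBr, hcA, hcB⟩ := hsplit
  by_contra h
  rw [Finset.not_nonempty_iff_eq_empty, Finset.union_eq_empty] at h
  obtain ⟨hA, hB⟩ := h
  have hSAne : SA.Nonempty := Finset.card_pos.mp (by
    have : 2 ≤ SA.card := by simpa [hA] using hcA
    omega)
  have hSBne : SB.Nonempty := Finset.card_pos.mp (by
    have : 2 ≤ SB.card := by simpa [hB] using hcB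
    omega)
  obtain ⟨s, hs⟩ := hSAne
  obtain ⟨t, ht⟩ := hSBne
  obtain ⟨w⟩ := hconn.preconnected s t
  have stay : ∀ {x y : V} (w : G.Walk x y), x ∈ SA → y ∈ SA := by
    intro x y w
    induction w with
    | nil => exact id
    | @cons a b c h q ih =>
      intro ha
      have hb : b ∈ A ∪ B ∪ SA ∪ SB := hcover b
      simp only [hA, hB, Finset.empty_union, Finset.mem_union] at hb
      rcases hb with hb | hb
      · exact ih hb
      · exact ((hSAr a ha b (Finset.mem_union_right _ hb)) h).elim
  exact Finset.disjoint_left.mp hSASB (stay w hs) ht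

private lemma exists_nbr (hconn : G.Connected) (hsplit : IsSplit G A B SA SB)
    {C : Finset V} (hC : OutsideComp G A B C) :
    ∃ c ∈ C, ∃ u ∈ A ∪ B, G.Adj c u := by
  obtain ⟨c₀, hc₀⟩ := hC.1
  obtain ⟨a, ha⟩ := AB_nonempty hconn hsplit
  obtain ⟨w⟩ := hconn.preconnected c₀ a
  have aux : ∀ {x y : V} (w : G.Walk x y), x ∈ C → y ∈ A ∪ B →
      ∃ c ∈ C, ∃ u ∈ A ∪ B, G.Adj c u := by
    intro x y w
    induction w with
    | nil =>
      intro hx hy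
      rcases Finset.mem_union.mp hy with h | h
      · exact ((hC.2.1 _ hx).1 h).elim
      · exact ((hC.2.1 _ hx).2 h).elim
    | @cons a b c h q ih =>
      intro hx hy
      by_cases hb : b ∈ A ∪ B
      · exact ⟨a, hx, b, hb, h⟩
      · rw [Finset.mem_union] at hb
        push_neg at hb
        exact ih (hC.2.2.2 a hx b h hb.1 hb.2) hy
  exact aux w hc₀ ha

private lemma key_rel (hsplit : IsSplit G A B SA SB) {C : Finset V}
    (hC : OutsideComp G A B C) {c c' u u' : V} (hc : c ∈ C) (hc' : c' ∈ C)
    (hu : u ∈ A ∪ B) (hu' : u' ∈ A ∪ B) (h1 : G.Adj c u) (h2 : G.Adj c' u') :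
    Relation.EqvGen (SplitRel G A B SA SB) u u' := by
  by_cases hne : u = u'
  · subst hne; exact Relation.EqvGen.refl u
  have hmemC : ∀ z ∈ C, z ∉ A ∧ z ∉ B := hC.2.1
  have notC : ∀ z, z ∈ A ∪ B → z ∉ C := by
    intro z hz hzC
    rcases Finset.mem_union.mp hz with h | h
    · exact (hmemC z hzC).1 h
    · exact (hmemC z hzC).2 h
  obtain ⟨q, hq⟩ := hC.2.2.1 c hc c' hc'
  let w : G.Walk u u' := SimpleGraph.Walk.cons h1.symm (q.concat h2)
  have hws : ∀ z ∈ w.support, z = u ∨ z ∈ C ∨ z = u' := by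
    intro z hz
    simp only [w, SimpleGraph.Walk.support_cons, SimpleGraph.Walk.support_concat,
      List.concat_eq_append, List.mem_cons, List.mem_append, List.not_mem_nil,
      or_false] at hz
    rcases hz with rfl | hz | rfl
    · exact Or.inl rfl
    · exact Or.inr (Or.inl (hq z hz))
    · exact Or.inr (Or.inr rfl)
  have hwe : s(u, u') ∉ w.edges := by
    intro he
    simp only [w, SimpleGraph.Walk.edges_cons, List.mem_cons] at he
    rcases he with he | he
    · rcases Sym2.eq_iff.mp he with ⟨-, rfl⟩ | ⟨rfl, -⟩
      · exact notC u' hu' hc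
      · exact notC u hu hc
    · have := (q.concat h2).fst_mem_support_of_mem_edges he
      rw [SimpleGraph.Walk.support_concat, List.mem_append] at this
      rcases this with h | h
      · exact notC u hu (hq u h)
      · exact hne (List.mem_singleton.mp h)
  obtain ⟨p, hpath, hsupp, hedges⟩ : ∃ p : G.Walk u u', p.IsPath ∧
      (∀ z ∈ p.support, z ∈ w.support) ∧ ∀ e ∈ p.edges, e ∈ w.edges :=
    ⟨w.bypass, w.bypass_isPath, fun z hz => w.support_bypass_subset hz,
      fun e he => w.edges_bypass_subset he⟩
  have hlen : 2 ≤ p.length := by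
    cases p with
    | nil => exact absurd rfl hne
    | @cons _ b _ h' q' =>
      simp only [SimpleGraph.Walk.length_cons]
      by_contra hcon
      have hq0 : q'.length = 0 := by omega
      have hb : b = u' := SimpleGraph.Walk.eq_of_length_eq_zero hq0
      subst hb
      exact hwe (hedges _ (by rw [SimpleGraph.Walk.edges_cons]; exact List.mem_cons_self))
  refine Relation.EqvGen.rel _ _ ⟨hu, hu', Or.inr ⟨p, hpath, hlen, ?_⟩⟩
  intro z hz hzu hzu'
  rcases hws z (hsupp z hz) with rfl | hzC | rfl
  · exact absurd rfl hzu
  · have h4 := hsplit.1 z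
    have h5 := hmemC z hzC
    simp only [Finset.mem_union, h5.1, h5.2, false_or] at h4
    rw [Finset.mem_union]
    tauto
  · exact absurd rfl hzu'

private lemma comp_exists [Fintype V] {v : V} (hvA : v ∉ A) (hvB : v ∉ B) :
    ∃ C : Finset V, OutsideComp G A B C ∧ v ∈ C := by
  classical
  set R : V → V → Prop := fun a b => G.Adj a b ∧ b ∉ A ∧ b ∉ B with hR
  have notAB : ∀ u, Relation.ReflTransGen R v u → u ∉ A ∧ u ∉ B := by
    intro u h
    induction h with
    | refl => exact ⟨hvA, hvB⟩
    | tail h₁ h₂ ih => exact ⟨h₂.2.1, h₂.2.2⟩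
  have walkOf : ∀ {u : V}, Relation.ReflTransGen R v u →
      ∃ p : G.Walk v u, ∀ z ∈ p.support, Relation.ReflTransGen R v z := by
    intro u h
    induction h with
    | refl =>
      refine ⟨SimpleGraph.Walk.nil, ?_⟩
      intro z hz
      simp only [SimpleGraph.Walk.support_nil, List.mem_singleton] at hz
      subst hz
      exact Relation.ReflTransGen.refl
    | tail h₁ h₂ ih =>
      obtain ⟨p, hp⟩ := ih
      refine ⟨p.concat h₂.1, ?_⟩
      intro z hz
      rw [SimpleGraph.Walk.support_concat, List.mem_append] at hz
      rcases hz with h | h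
      · exact hp z h
      · rw [List.mem_singleton] at h
        subst h
        exact h₁.tail h₂
  refine ⟨Finset.univ.filter fun u => Relation.ReflTransGen R v u, ⟨⟨v, ?_⟩, ?_, ?_, ?_⟩, ?_⟩
  · simp only [Finset.mem_filter, Finset.mem_univ, true_and]
    exact Relation.ReflTransGen.refl
  · intro u hu
    simp only [Finset.mem_filter, Finset.mem_univ, true_and] at hu
    exact notAB u hu
  · intro u hu u₂ hu₂
    simp only [Finset.mem_filter, Finset.mem_univ, true_and] at hu hu₂
    obtain ⟨p1, hp1⟩ := walkOf hu
    obtain ⟨p2, hp2⟩ := walkOf hu₂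
    refine ⟨p1.reverse.append p2, ?_⟩
    intro z hz
    rw [SimpleGraph.Walk.support_append, List.mem_append] at hz
    simp only [Finset.mem_filter, Finset.mem_univ, true_and]
    rcases hz with h | h
    · rw [SimpleGraph.Walk.support_reverse, List.mem_reverse] at h
      exact hp1 z h
    · exact hp2 z (List.mem_of_mem_tail h)
  · intro u hu x hadj hxA hxB
    simp only [Finset.mem_filter, Finset.mem_univ, true_and] at hu ⊢
    exact hu.tail ⟨hadj, hxA, hxB⟩
  · simp only [Finset.mem_filter, Finset.mem_univ, true_and]
    exact Relation.ReflTransGen.refl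

private lemma class_eq {Φ Φ' : Set V} (h : IsClass G A B SA SB Φ)
    (h' : IsClass G A B SA SB Φ') {u u' : V} (hu : u ∈ Φ) (hu' : u' ∈ Φ')
    (hrel : Relation.EqvGen (SplitRel G A B SA SB) u u') : Φ = Φ' := by
  obtain ⟨x, hx, rfl⟩ := h
  obtain ⟨x', hx', rfl⟩ := h'
  simp only [Set.mem_setOf_eq] at hu hu'
  ext y
  simp only [Set.mem_setOf_eq]
  constructor
  · rintro ⟨hy, hxy⟩
    refine ⟨hy, ?_⟩
    exact Relation.EqvGen.trans _ _ _ (Relation.EqvGen.trans _ _ _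
      (Relation.EqvGen.trans _ _ _ hu'.2 (Relation.EqvGen.symm _ _ hrel))
      (Relation.EqvGen.symm _ _ hu.2)) hxy
  · rintro ⟨hy, hxy⟩
    refine ⟨hy, ?_⟩
    exact Relation.EqvGen.trans _ _ _ (Relation.EqvGen.trans _ _ _
      (Relation.EqvGen.trans _ _ _ hu.2 hrel)
      (Relation.EqvGen.symm _ _ hu'.2)) hxy

end Aux
/-- Every connected component of `G − (A ∪ B)` contains a vertex adjacent to a vertex
of exactly one equivalence class of `∼`; consequently the sets `𝔰(Φ)`, taken over
all equivalence classes `Φ` of `∼`, form a partition of `𝔰(A) ∪ 𝔰(B)`. -/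
theorem sClass_partition
    {V : Type*} [DecidableEq V] [Fintype V]
    (G : SimpleGraph V) (hconn : G.Connected)
    (A B SA SB : Finset V) (hsplit : IsSplit G A B SA SB) :
    (∀ C : Finset V, OutsideComp G A B C →
      ∃! Φ : Set V, IsClass G A B SA SB Φ ∧ ∃ c ∈ C, ∃ u ∈ Φ, G.Adj c u) ∧
    (∀ Φ Φ' : Set V, IsClass G A B SA SB Φ → IsClass G A B SA SB Φ' → Φ ≠ Φ' →
      Disjoint (sClass G A B Φ) (sClass G A B Φ')) ∧
    (⋃ Φ ∈ {Ψ : Set V | IsClass G A B SA SB Ψ}, sClass G A B Φ) = (↑SA ∪ ↑SB : Set V) := by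
  classical
  have part1 : ∀ C : Finset V, OutsideComp G A B C →
      ∃! Φ : Set V, IsClass G A B SA SB Φ ∧ ∃ c ∈ C, ∃ u ∈ Φ, G.Adj c u := by
    intro C hC
    obtain ⟨c, hc, u, hu, hadj⟩ := exists_nbr hconn hsplit hC
    refine ⟨{y | y ∈ A ∪ B ∧ Relation.EqvGen (SplitRel G A B SA SB) u y},
      ⟨⟨u, hu, rfl⟩, c, hc, u, ⟨hu, Relation.EqvGen.refl u⟩, hadj⟩, ?_⟩
    rintro Ψ ⟨hΨ, c', hc', u', hu', hadj'⟩
    have hu'AB : u' ∈ A ∪ B := by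
      obtain ⟨x, hx, rfl⟩ := hΨ
      exact hu'.1
    have hrel := key_rel hsplit hC hc' hc hu'AB hu hadj' hadj
    exact class_eq hΨ ⟨u, hu, rfl⟩ hu' ⟨hu, Relation.EqvGen.refl u⟩ hrel
  refine ⟨part1, ?_, ?_⟩
  · intro Φ Φ' hΦ hΦ' hne
    rw [Set.disjoint_left]
    rintro v ⟨C, hC, hvC, c, hc, u, hu, hadj⟩ ⟨C', hC', hvC', c', hc', u', hu', hadj'⟩
    have hCC' : C = C' := comp_eq hC hC' hvC hvC'
    subst hCC'
    obtain ⟨Ψ, -, huniq⟩ := part1 C hC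
    exact hne ((huniq Φ ⟨hΦ, c, hc, u, hu, hadj⟩).trans
      (huniq Φ' ⟨hΦ', c', hc', u', hu', hadj'⟩).symm)
  · ext v
    simp only [Set.mem_iUnion, Set.mem_setOf_eq, Set.mem_union, Finset.mem_coe]
    constructor
    · rintro ⟨Φ, hΦ, C, hC, hvC, -⟩
      have h5 := hC.2.1 v hvC
      have h4 := hsplit.1 v
      simp only [Finset.mem_union, h5.1, h5.2, false_or] at h4
      exact h4
    · intro hv
      have hvA : v ∉ A := by
        rcases hv with h | h
        · exact Finset.disjoint_right.mp hsplit.2.2.1 h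
        · exact Finset.disjoint_right.mp hsplit.2.2.2.1 h
      have hvB : v ∉ B := by
        rcases hv with h | h
        · exact Finset.disjoint_right.mp hsplit.2.2.2.2.1 h
        · exact Finset.disjoint_right.mp hsplit.2.2.2.2.2.1 h
      obtain ⟨C, hC, hvC⟩ := comp_exists (G := G) hvA hvB
      obtain ⟨Φ, ⟨hcls, hex⟩, -⟩ := part1 C hC
      exact ⟨Φ, hcls, C, hC, hvC, hex⟩
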